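/- An E-linear code C of length 2n is right symplectic nice, i.e. |C|·|C^{⊥_{S_R}}| = |E|^{2n} = 4^{2n}, if and only if C_Res = {0}; and in that case C^{⊥_{S_R}} = C^{⊥_S}. Consequently, a nonzero E-linear code cannot be both left and right symplectic nice. -/

import Mathlib

open Finset

/-- The non-unital ring `E`, realized as pairs `(u, v) ∈ F₂ × F₂`
representing `uκ + vζ`. -/
def Ering : Type := (ZMod 2) × (ZMod 2)

namespace Ering

instance : AddCommGroup Ering := inferInstanceAs (AddCommGroup ((ZMod 2) × (ZMod 2)))
instance : DecidableEq Ering := inferInstanceAs (DecidableEq ((ZMod 2) × (ZMod 2)))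
instance : Fintype Ering := inferInstanceAs (Fintype ((ZMod 2) × (ZMod 2)))

instance : Mul Ering := ⟨fun a b => (a.1 * b.1, a.2 * b.1)⟩

instance : NonUnitalRing Ering :=
  { (inferInstance : AddCommGroup Ering), (inferInstance : Mul Ering) with
    left_distrib := by decide
    right_distrib := by decide
    zero_mul := by decide
    mul_zero := by decide
    mul_assoc := by decide }

/-- The generator κ. -/
def kappa : Ering := ((1 : ZMod 2), (0 : ZMod 2))
/-- The generator τ. -/
def tau : Ering := ((1 : ZMod 2), (1 : ZMod 2))
/-- ζ = κ + τ. -/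
def zeta : Ering := ((0 : ZMod 2), (1 : ZMod 2))

/-- The scalar action of `F₂` on `E`: `u • e = e` if `u = 1`, else `0`. -/
def fsmul (u : ZMod 2) (e : Ering) : Ering := if u = 1 then e else 0

/-- `E`-vectors of length `2n`, written as a pair `(u | v)` of halves of length `n`. -/
abbrev VE (n : ℕ) := (Fin n → Ering) × (Fin n → Ering)

/-- `F₂`-vectors of length `2n`, written as a pair of halves of length `n`. -/
abbrev VF (n : ℕ) := (Fin n → ZMod 2) × (Fin n → ZMod 2)

/-- Symplectic inner product on `E^{2n}`: `⟨(u|v),(u'|v')⟩ₛ = ⟨u,v'⟩ + ⟨v,u'⟩`. -/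
def sympE {n : ℕ} (x y : VE n) : Ering := ∑ i, x.1 i * y.2 i + ∑ i, x.2 i * y.1 i

/-- Symplectic inner product on `F₂^{2n}`. -/
def sympF {n : ℕ} (x y : VF n) : ZMod 2 := ∑ i, x.1 i * y.2 i + ∑ i, x.2 i * y.1 i

/-- An `E`-linear code: a left `E`-submodule of `E^{2n}`. -/
def IsLinearCode {n : ℕ} (C : Set (VE n)) : Prop :=
  (0 : VE n) ∈ C ∧ (∀ x ∈ C, ∀ y ∈ C, x + y ∈ C) ∧
    (∀ e : Ering, ∀ x ∈ C, ((fun i => e * x.1 i, fun i => e * x.2 i) : VE n) ∈ C)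

/-- Componentwise reduction `π : E^{2n} → F₂^{2n}`, `π(uκ + vζ) = u`. -/
def resVec {n : ℕ} (x : VE n) : VF n := (fun i => (x.1 i).1, fun i => (x.2 i).1)

/-- For `e ∈ E` and `v ∈ F₂^{2n}`, the vector `ev ∈ E^{2n}` with entries `vᵢ • e`. -/
def evec {n : ℕ} (e : Ering) (v : VF n) : VE n :=
  (fun i => fsmul (v.1 i) e, fun i => fsmul (v.2 i) e)

/-- The residue code `C_Res = π(C)`. -/
def resCode {n : ℕ} (C : Set (VE n)) : Set (VF n) := resVec '' C

/-- The torsion code `C_Tor = {v : ζv ∈ C}`. -/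
def torCode {n : ℕ} (C : Set (VE n)) : Set (VF n) := {v | evec zeta v ∈ C}

/-- The left symplectic dual. -/
def leftDual {n : ℕ} (C : Set (VE n)) : Set (VE n) := {z | ∀ w ∈ C, sympE z w = 0}

/-- The right symplectic dual. -/
def rightDual {n : ℕ} (C : Set (VE n)) : Set (VE n) := {z | ∀ w ∈ C, sympE w z = 0}

/-- The two-sided symplectic dual. -/
def dual {n : ℕ} (C : Set (VE n)) : Set (VE n) := leftDual C ∩ rightDual C

/-- The binary symplectic dual of `D ⊆ F₂^{2n}`. -/
def dualF {n : ℕ} (D : Set (VF n)) : Set (VF n) := {z | ∀ w ∈ D, sympF z w = 0}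

/-- The two-sided symplectic hull. -/
def SHull {n : ℕ} (C : Set (VE n)) : Set (VE n) := C ∩ dual C

/-- The left symplectic hull. -/
def LSHull {n : ℕ} (C : Set (VE n)) : Set (VE n) := C ∩ leftDual C

/-- The right symplectic hull. -/
def RSHull {n : ℕ} (C : Set (VE n)) : Set (VE n) := C ∩ rightDual C

/-- Symplectic hull of a binary code. -/
def SHullF {n : ℕ} (D : Set (VF n)) : Set (VF n) := D ∩ dualF D

/-- A free `E`-linear code: residue and torsion codes coincide. -/
def IsFree {n : ℕ} (C : Set (VE n)) : Prop := resCode C = torCode C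

end Ering

open Ering
namespace Ering

private abbrev F2 := ZMod 2

/-- second-coordinate vector -/
private def sVec {n : ℕ} (x : VE n) : VF n := (fun i => (x.1 i).2, fun i => (x.2 i).2)

private lemma mul_def (a b : Ering) : a * b = ((a.1 * b.1 : ZMod 2), (a.2 * b.1 : ZMod 2)) := rfl

private lemma fsmul_zeta (u : ZMod 2) : fsmul u zeta = ((0 : ZMod 2), u) := by
  have hu : u = 0 ∨ u = 1 := by revert u; decide
  rcases hu with rfl | rfl <;> rfl

private lemma evec_zeta {n : ℕ} (v : VF n) :
    evec zeta v = (fun i => ((0 : ZMod 2), v.1 i), fun i => ((0 : ZMod 2), v.2 i)) := by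
  unfold evec
  refine Prod.ext ?_ ?_ <;> funext i <;> exact fsmul_zeta _

private lemma neg_VE {n : ℕ} (x : VE n) : -x = x := by
  have h : ∀ a : Ering, -a = a := by decide
  refine Prod.ext ?_ ?_ <;> funext i <;> exact h _

private lemma resVec_add {n : ℕ} (x y : VE n) : resVec (x + y) = resVec x + resVec y := rfl

private lemma sVec_evec_zeta {n : ℕ} (v : VF n) : sVec (evec zeta v) = v := by
  rw [evec_zeta]; rfl

private lemma resVec_evec_zeta {n : ℕ} (v : VF n) : resVec (evec zeta v) = 0 := by
  rw [evec_zeta]; rfl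

private lemma evec_zeta_sVec {n : ℕ} (x : VE n) (h : resVec x = 0) :
    evec zeta (sVec x) = x := by
  rw [evec_zeta]
  have h1 := congrArg Prod.fst h
  have h2 := congrArg Prod.snd h
  refine Prod.ext ?_ ?_ <;> funext i
  · exact (Prod.ext (congrFun h1 i).symm rfl : ((0 : ZMod 2), (x.1 i).2) = x.1 i)
  · exact (Prod.ext (congrFun h2 i).symm rfl : ((0 : ZMod 2), (x.2 i).2) = x.2 i)

end Ering
namespace Ering

private lemma zeta_smul_eq {n : ℕ} (w : VE n) :
    ((fun i => zeta * w.1 i, fun i => zeta * w.2 i) : VE n) = evec zeta (resVec w) := by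
  rw [evec_zeta]
  have h : ∀ e : Ering, zeta * e = ((0 : ZMod 2), e.1) := by
    intro e
    refine Prod.ext ?_ ?_
    · show (0 : ZMod 2) * e.1 = 0
      exact zero_mul _
    · show (1 : ZMod 2) * e.1 = e.1
      exact one_mul _
  refine Prod.ext ?_ ?_ <;> funext i <;> exact h _

private lemma kappa_smul_eq {n : ℕ} (w : VE n) :
    w + ((fun i => kappa * w.1 i, fun i => kappa * w.2 i) : VE n) = evec zeta (sVec w) := by
  rw [evec_zeta]
  have h : ∀ e : Ering, e + kappa * e = ((0 : ZMod 2), e.2) := by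
    intro e
    have h1 : ∀ a : ZMod 2, a + 1 * a = 0 := by decide
    have h2 : ∀ a b : ZMod 2, b + 0 * a = b := by decide
    refine Prod.ext ?_ ?_
    · exact h1 e.1
    · exact h2 e.1 e.2
  refine Prod.ext ?_ ?_ <;> funext i <;> exact h _

private lemma resVec_mem_torCode {n : ℕ} {C : Set (VE n)} (hC : IsLinearCode C)
    {w : VE n} (hw : w ∈ C) : resVec w ∈ torCode C := by
  have := hC.2.2 zeta w hw
  rwa [torCode, Set.mem_setOf_eq, ← zeta_smul_eq]

private lemma sVec_mem_torCode {n : ℕ} {C : Set (VE n)} (hC : IsLinearCode C)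
    {w : VE n} (hw : w ∈ C) : sVec w ∈ torCode C := by
  have := hC.2.1 w hw _ (hC.2.2 kappa w hw)
  rwa [torCode, Set.mem_setOf_eq, ← kappa_smul_eq]

private def fstE : Ering →+ ZMod 2 := AddMonoidHom.mk' (fun e => e.1) (fun _ _ => rfl)
private def sndE : Ering →+ ZMod 2 := AddMonoidHom.mk' (fun e => e.2) (fun _ _ => rfl)

private lemma sympE_eq {n : ℕ} (x y : VE n) :
    sympE x y = ((sympF (resVec x) (resVec y) : ZMod 2), (sympF (sVec x) (resVec y) : ZMod 2)) := by
  unfold sympE sympF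
  refine Prod.ext ?_ ?_
  · have h : (∑ i, x.1 i * y.2 i + ∑ i, x.2 i * y.1 i).1
        = fstE (∑ i, x.1 i * y.2 i + ∑ i, x.2 i * y.1 i) := rfl
    rw [h, map_add, map_sum, map_sum]; rfl
  · have h : (∑ i, x.1 i * y.2 i + ∑ i, x.2 i * y.1 i).2
        = sndE (∑ i, x.1 i * y.2 i + ∑ i, x.2 i * y.1 i) := rfl
    rw [h, map_add, map_sum, map_sum]; rfl

private lemma sympF_comm {n : ℕ} (x y : VF n) : sympF x y = sympF y x := by
  unfold sympF
  rw [add_comm]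
  congr 1 <;> exact Finset.sum_congr rfl fun i _ => mul_comm _ _

private lemma sympF_zero_right {n : ℕ} (x : VF n) : sympF x 0 = 0 := by
  unfold sympF
  have h1 : ∀ i, (0 : VF n).1 i = 0 := fun _ => rfl
  have h2 : ∀ i, (0 : VF n).2 i = 0 := fun _ => rfl
  simp [h1, h2]

end Ering
namespace Ering

/-- The coordinate equivalence `E^{2n} ≃ F₂^{2n} × F₂^{2n}`. -/
private def Phi (n : ℕ) : VE n ≃ VF n × VF n where
  toFun x := (resVec x, sVec x)
  invFun p := (fun i => ((p.1.1 i : ZMod 2), (p.2.1 i : ZMod 2)),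
               fun i => ((p.1.2 i : ZMod 2), (p.2.2 i : ZMod 2)))
  left_inv x := by
    refine Prod.ext ?_ ?_ <;> funext i <;> exact Prod.ext rfl rfl
  right_inv p := by
    refine Prod.ext ?_ ?_ <;> refine Prod.ext ?_ ?_ <;> funext i <;> rfl

private lemma card_preimage_equiv {α β : Type*} (e : α ≃ β) (T : Set β) :
    Nat.card ↥(e ⁻¹' T) = Nat.card ↥T :=
  Nat.card_congr (e.subtypeEquiv fun _ => Iff.rfl)

private lemma card_VF (n : ℕ) : Nat.card (VF n) = 2 ^ (2 * n) := by
  simp only [Nat.card_eq_fintype_card, Fintype.card_prod, Fintype.card_fun, ZMod.card,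
    Fintype.card_fin]
  rw [← pow_add, two_mul]

private lemma card_VE (n : ℕ) : Nat.card (VE n) = 4 ^ (2 * n) := by
  have h : Fintype.card Ering = 4 := rfl
  simp only [Nat.card_eq_fintype_card, Fintype.card_prod, Fintype.card_fun, h,
    Fintype.card_fin]
  rw [← pow_add, two_mul]

/-- cardinality of a `resVec`-preimage -/
private lemma card_res_preimage {n : ℕ} (S : Set (VF n)) :
    Nat.card ↥(resVec ⁻¹' S) = Nat.card ↥S * 2 ^ (2 * n) := by
  have h : resVec ⁻¹' S = (Phi n) ⁻¹' (S ×ˢ Set.univ) := by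
    ext x
    simp [Phi, Set.mem_prod]
  rw [h, card_preimage_equiv, Nat.card_congr (Equiv.Set.prod S Set.univ), Nat.card_prod,
    Nat.card_congr (Equiv.Set.univ (VF n)), card_VF]

end Ering
namespace Ering

private lemma zmod2_cases (c : ZMod 2) : c = 0 ∨ c = 1 := by revert c; decide

/-- `torCode C` as a `ZMod 2`-submodule. -/
private def torSub {n : ℕ} (C : Set (VE n)) (hC : IsLinearCode C) : Submodule (ZMod 2) (VF n) where
  carrier := torCode C
  zero_mem' := by
    have h : evec zeta (0 : VF n) = 0 := by
      rw [evec_zeta]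
      refine Prod.ext ?_ ?_ <;> funext i <;> rfl
    show evec zeta (0 : VF n) ∈ C
    rw [h]; exact hC.1
  add_mem' := by
    intro a b ha hb
    have h : evec zeta (a + b) = evec zeta a + evec zeta b := by
      rw [evec_zeta, evec_zeta, evec_zeta]
      refine Prod.ext ?_ ?_ <;> funext i <;> exact Prod.ext (add_zero (0 : ZMod 2)).symm rfl
    show evec zeta (a + b) ∈ C
    rw [h]; exact hC.2.1 _ ha _ hb
  smul_mem' := by
    intro c x hx
    rcases zmod2_cases c with rfl | rfl
    · have h : (0 : ZMod 2) • x = 0 := zero_smul _ _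
      rw [h]
      have h0 : evec zeta (0 : VF n) = 0 := by
        rw [evec_zeta]; refine Prod.ext ?_ ?_ <;> funext i <;> rfl
      show evec zeta (0 : VF n) ∈ C
      rw [h0]; exact hC.1
    · have h : (1 : ZMod 2) • x = x := one_smul _ _
      rw [h]; exact hx

private lemma sympF_add_left {n : ℕ} (x x' y : VF n) :
    sympF (x + x') y = sympF x y + sympF x' y := by
  unfold sympF
  have h1 : ∀ i, (x + x').1 i = x.1 i + x'.1 i := fun _ => rfl
  have h2 : ∀ i, (x + x').2 i = x.2 i + x'.2 i := fun _ => rfl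
  simp only [h1, h2, add_mul, Finset.sum_add_distrib]
  ring

private lemma sympF_smul_left {n : ℕ} (c : ZMod 2) (x y : VF n) :
    sympF (c • x) y = c * sympF x y := by
  rcases zmod2_cases c with rfl | rfl
  · rw [zero_smul, zero_mul]
    exact (sympF_comm _ _).trans (sympF_zero_right _)
  · rw [one_smul, one_mul]

/-- The symplectic form as a bilinear map. -/
private def Bf (n : ℕ) : VF n →ₗ[ZMod 2] Module.Dual (ZMod 2) (VF n) :=
  LinearMap.mk₂ (ZMod 2) sympF sympF_add_left
    (fun c x y => by rw [sympF_smul_left, smul_eq_mul])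
    (fun x y y' => by rw [sympF_comm, sympF_add_left, sympF_comm y, sympF_comm y'])
    (fun c x y => by rw [sympF_comm, sympF_smul_left, sympF_comm, smul_eq_mul])

private lemma Bf_apply {n : ℕ} (x y : VF n) : Bf n x y = sympF x y := rfl

private lemma Bf_injective (n : ℕ) : Function.Injective (Bf n) := by
  rw [injective_iff_map_eq_zero]
  intro z hz
  have key : ∀ y : VF n, sympF z y = 0 := fun y => by
    rw [← Bf_apply, hz]; rfl
  refine Prod.ext ?_ ?_ <;> funext i
  · have := key (0, Pi.single i 1)
    unfold sympF at this
    simpa [Pi.single_apply, mul_ite, Finset.sum_ite_eq'] using this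
  · have := key (Pi.single i 1, 0)
    unfold sympF at this
    simpa [Pi.single_apply, mul_ite, Finset.sum_ite_eq'] using this

private lemma Bf_surjective (n : ℕ) : Function.Surjective (Bf n) := by
  have h : Module.finrank (ZMod 2) (VF n) =
      Module.finrank (ZMod 2) (Module.Dual (ZMod 2) (VF n)) :=
    (Subspace.dual_finrank_eq).symm
  exact (LinearMap.injective_iff_surjective_of_finrank_eq_finrank h).mp (Bf_injective n)

private lemma card_module_pow (M : Type*) [AddCommGroup M] [Module (ZMod 2) M] [Finite M] :
    Nat.card M = 2 ^ Module.finrank (ZMod 2) M := by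
  have : Fintype M := Fintype.ofFinite M
  rw [Nat.card_eq_fintype_card, Module.card_eq_pow_finrank (K := ZMod 2), ZMod.card]

end Ering
namespace Ering

private lemma card_dual_mul {n : ℕ} (D : Submodule (ZMod 2) (VF n)) :
    Nat.card ↥D * Nat.card ↥(dualF (D : Set (VF n))) = 2 ^ (2 * n) := by
  classical
  set θ : VF n →ₗ[ZMod 2] Module.Dual (ZMod 2) ↥D := D.dualRestrict ∘ₗ Bf n with hθ
  have hsurj : Function.Surjective θ :=
    (Subspace.dualRestrict_surjective).comp (Bf_surjective n)
  have hker : dualF (D : Set (VF n)) = (LinearMap.ker θ : Set (VF n)) := by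
    ext z
    simp only [dualF, Set.mem_setOf_eq, SetLike.mem_coe, LinearMap.mem_ker]
    constructor
    · intro h
      apply LinearMap.ext
      intro w
      have h1 := h w w.2
      simpa [hθ, Submodule.dualRestrict_apply, Bf_apply] using h1
    · intro h w hw
      have h1 := congrArg (fun φ : Module.Dual (ZMod 2) ↥D => φ ⟨w, hw⟩) h
      simpa [hθ, Submodule.dualRestrict_apply, Bf_apply] using h1
  have hfr : Module.finrank (ZMod 2) (VF n) = 2 * n := by
    rw [Module.finrank_prod, Module.finrank_pi, Fintype.card_fin, two_mul]
  have hrange : LinearMap.range θ = ⊤ := LinearMap.range_eq_top.mpr hsurj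
  have h2 : Module.finrank (ZMod 2) ↥(LinearMap.range θ) = Module.finrank (ZMod 2) ↥D := by
    rw [hrange, finrank_top]
    exact Subspace.dual_finrank_eq
  have h3 := LinearMap.finrank_range_add_finrank_ker θ
  rw [h2, hfr] at h3
  have hcast : Nat.card ↥(dualF (D : Set (VF n))) = Nat.card ↥(LinearMap.ker θ) := by
    rw [hker]
    exact Nat.card_congr (Equiv.subtypeEquivRight fun _ => Iff.rfl)
  rw [hcast, card_module_pow ↥D, card_module_pow ↥(LinearMap.ker θ), ← pow_add, h3]

private lemma card_C_eq {n : ℕ} (C : Set (VE n)) (hC : IsLinearCode C) :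
    Nat.card ↥C = Nat.card ↥(resCode C) * Nat.card ↥(torCode C) := by
  classical
  set C' : AddSubgroup (VE n) :=
    { carrier := C
      zero_mem' := hC.1
      add_mem' := fun ha hb => hC.2.1 _ ha _ hb
      neg_mem' := fun {x} hx => by rwa [neg_VE] } with hC'
  set f : C' →+ VF n := AddMonoidHom.mk' (fun w => resVec ↑w) (fun a b => rfl) with hf
  have hker : ∀ w : C', w ∈ f.ker ↔ resVec (w : VE n) = 0 := by
    intro w
    rw [AddMonoidHom.mem_ker]
    exact Iff.rfl
  have hcard0 : Nat.card ↥C = Nat.card C' :=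
    Nat.card_congr (Equiv.subtypeEquivRight fun _ => Iff.rfl)
  have h1 : Nat.card C' = Nat.card (C' ⧸ f.ker) * Nat.card f.ker :=
    AddSubgroup.card_eq_card_quotient_mul_card_addSubgroup f.ker
  have h2 : Nat.card (C' ⧸ f.ker) = Nat.card f.range :=
    Nat.card_congr (QuotientAddGroup.quotientKerEquivRange f).toEquiv
  have h3 : Nat.card ↥(resCode C) = Nat.card f.range := by
    apply Nat.card_congr
    apply Equiv.setCongr
    ext v
    constructor
    · rintro ⟨w, hw, rfl⟩
      exact ⟨⟨w, hw⟩, rfl⟩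
    · rintro ⟨w, rfl⟩
      exact ⟨↑w, w.2, rfl⟩
  have h4 : Nat.card ↥f.ker = Nat.card ↥(torCode C) := by
    apply Nat.card_congr
    exact
      { toFun := fun w => ⟨sVec ((w : C') : VE n), by
          show evec zeta _ ∈ C
          rw [evec_zeta_sVec _ ((hker _).mp w.2)]
          exact (w : C').2⟩
        invFun := fun v => ⟨⟨evec zeta ↑v, v.2⟩, (hker _).mpr (resVec_evec_zeta _)⟩
        left_inv := fun w => by
          apply Subtype.ext; apply Subtype.ext
          exact evec_zeta_sVec _ ((hker _).mp w.2)
        right_inv := fun v => Subtype.ext (sVec_evec_zeta _) }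
  rw [hcard0, h1, h2, ← h3, h4]

private lemma rightDual_eq {n : ℕ} (C : Set (VE n)) (hC : IsLinearCode C) :
    rightDual C = resVec ⁻¹' (dualF (torCode C)) := by
  ext z
  simp only [rightDual, Set.mem_setOf_eq, Set.mem_preimage, dualF]
  constructor
  · intro h v hv
    have h1 := h (evec zeta v) hv
    rw [sympE_eq] at h1
    have h2 := congrArg Prod.snd h1
    rw [sVec_evec_zeta] at h2
    rw [sympF_comm]
    exact h2
  · intro h w hw
    rw [sympE_eq]
    have h0 : (0 : Ering) = ((0 : ZMod 2), (0 : ZMod 2)) := rfl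
    rw [h0]
    refine Prod.ext ?_ ?_
    · have := h _ (resVec_mem_torCode hC hw)
      rw [sympF_comm] at this
      exact this
    · have := h _ (sVec_mem_torCode hC hw)
      rw [sympF_comm] at this
      exact this

private lemma leftDual_univ {n : ℕ} {C : Set (VE n)} (h : resCode C = ({0} : Set (VF n))) :
    leftDual C = Set.univ := by
  ext z
  simp only [leftDual, Set.mem_setOf_eq, Set.mem_univ, iff_true]
  intro w hw
  have hw0 : resVec w = 0 := by
    have hm : resVec w ∈ resCode C := ⟨w, hw, rfl⟩
    rw [h] at hm
    exact hm
  rw [sympE_eq, hw0]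
  have h0 : (0 : Ering) = ((0 : ZMod 2), (0 : ZMod 2)) := rfl
  rw [h0]
  exact Prod.ext (sympF_zero_right _) (sympF_zero_right _)

end Ering

/-- `C` is right symplectic nice iff `C_Res = {0}`, in which case
`C^{⊥_{S_R}} = C^{⊥_S}`; a nonzero code cannot be both left and right symplectic nice. -/
theorem Ering.right_nice_iff {n : ℕ} (C : Set (VE n)) (hC : IsLinearCode C) :
    (Nat.card ↥C * Nat.card ↥(rightDual C) = 4 ^ (2 * n) ↔
      resCode C = ({0} : Set (VF n))) ∧
    (resCode C = ({0} : Set (VF n)) → rightDual C = dual C) ∧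
    (C ≠ ({0} : Set (VE n)) →
      ¬ (Nat.card ↥C * Nat.card ↥(leftDual C) = 4 ^ (2 * n) ∧
         Nat.card ↥C * Nat.card ↥(rightDual C) = 4 ^ (2 * n))) := by
  have hpos : 0 < 4 ^ (2 * n) := pow_pos (by norm_num) _
  have h4 : (4 : ℕ) ^ (2 * n) = 2 ^ (2 * n) * 2 ^ (2 * n) := by
    rw [show (4 : ℕ) = 2 * 2 from rfl, mul_pow]
  have hdual : Nat.card ↥(torCode C) * Nat.card ↥(dualF (torCode C)) = 2 ^ (2 * n) :=
    card_dual_mul (torSub C hC)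
  have hprod : Nat.card ↥C * Nat.card ↥(rightDual C) = Nat.card ↥(resCode C) * 4 ^ (2 * n) := by
    rw [card_C_eq C hC, rightDual_eq C hC, card_res_preimage, h4, ← hdual]
    ring
  have hzero_res : (0 : VF n) ∈ resCode C := ⟨0, hC.1, rfl⟩
  have hiff : Nat.card ↥C * Nat.card ↥(rightDual C) = 4 ^ (2 * n) ↔
      resCode C = ({0} : Set (VF n)) := by
    rw [hprod]
    constructor
    · intro h
      have ha : Nat.card ↥(resCode C) = 1 :=
        Nat.eq_of_mul_eq_mul_right hpos (h.trans (one_mul _).symm)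
      rw [Nat.card_coe_set_eq, Set.ncard_eq_one] at ha
      obtain ⟨a, ha⟩ := ha
      rw [ha] at hzero_res ⊢
      rw [Set.mem_singleton_iff] at hzero_res
      rw [← hzero_res]
    · intro h
      rw [h, Nat.card_coe_set_eq, Set.ncard_singleton, one_mul]
  refine ⟨hiff, ?_, ?_⟩
  · intro h
    rw [dual, leftDual_univ h, Set.univ_inter]
  · rintro hne ⟨hL, hR⟩
    have hres := hiff.mp hR
    rw [leftDual_univ hres] at hL
    have hcu : Nat.card ↥(Set.univ : Set (VE n)) = 4 ^ (2 * n) := by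
      rw [Nat.card_congr (Equiv.Set.univ (VE n)), card_VE]
    rw [hcu] at hL
    have hc1 : Nat.card ↥C = 1 :=
      Nat.eq_of_mul_eq_mul_right hpos (hL.trans (one_mul _).symm)
    rw [Nat.card_coe_set_eq, Set.ncard_eq_one] at hc1
    obtain ⟨a, ha⟩ := hc1
    apply hne
    have h0 : (0 : VE n) ∈ C := hC.1
    rw [ha] at h0 ⊢
    rw [Set.mem_singleton_iff] at h0
    rw [← h0]
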